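/- Small-θ limit of the minimized negative cumulant generating function: for every α ∈ (0,1], lim_{θ ↓ 0} (1/θ) Ω^{(α,θ)} = R^{(α)}; equivalently, (1/θ) Ω^{(α,θ)} = R^{(α)} + ε^{(α,θ)} with ε^{(α,θ)} → 0 as θ ↓ 0. -/

import Mathlib

open Filter

noncomputable section

/-- `P` is a probability mass function on the finite type `α`. -/
def IsPMF {α : Type*} [Fintype α] (P : α → ℝ) : Prop :=
  (∀ a, 0 ≤ P a) ∧ (∑ a, P a) = 1

/-- Rényi divergence of order `1 + s` (natural logarithm), `EReal`-valued.
For `s ≥ 0` it is `⊤` when `supp P ⊄ supp Q`; for `s = 0` it is the relative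
entropy; otherwise it is `(1/s) log ∑_{x ∈ supp P} P(x)^{1+s} Q(x)^{-s}`. -/
def renyiDiv {α : Type*} [Fintype α] (s : ℝ) (P Q : α → ℝ) : EReal :=
  if 0 ≤ s ∧ ∃ a, 0 < P a ∧ Q a = 0 then ⊤
  else if s = 0 then
    (((∑ a ∈ Finset.univ.filter (fun a => 0 < P a), P a * Real.log (P a / Q a)) : ℝ) : EReal)
  else
    ((((1 / s) * Real.log (∑ a ∈ Finset.univ.filter (fun a => 0 < P a),
        P a ^ (1 + s) * Q a ^ (-s))) : ℝ) : EReal)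

/-- Mutual information `I(XY; W)` of a joint distribution on `(X × Y) × W`. -/
def mutualInfoW {X Y W : Type*} [Fintype X] [Fintype Y] [Fintype W] (P : X × Y × W → ℝ) : ℝ :=
  ∑ z ∈ Finset.univ.filter (fun z : X × Y × W => 0 < P z),
    P z * Real.log (P z /
      ((∑ w, P (z.1, z.2.1, w)) * (∑ p : X × Y, P (p.1, p.2, z.2.2))))

/-- The Markov chain condition `X − W − Y`. -/
def IsMarkovXWY {X Y W : Type*} [Fintype X] [Fintype Y] [Fintype W] (P : X × Y × W → ℝ) : Prop :=
  ∀ x y w, P (x, y, w) * (∑ p : X × Y, P (p.1, p.2, w)) =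
    (∑ y', P (x, y', w)) * (∑ x', P (x', y, w))

/-- Wyner's common information of the target distribution `π` on `X × Y`. -/
def CWyner {X Y : Type*} [Fintype X] [Fintype Y] (π : X × Y → ℝ) : ℝ :=
  sInf { r | ∃ P : X × Y × Fin (Fintype.card X * Fintype.card Y) → ℝ,
    IsPMF P ∧ (∀ x y, (∑ w, P (x, y, w)) = π (x, y)) ∧ IsMarkovXWY P ∧ r = mutualInfoW P }

/-- The message set size `⌈e^{nR}⌉` of a rate-`R` synthesis code at blocklength `n`. -/
def numMsgs (R : ℝ) (n : ℕ) : ℕ := ⌈Real.exp (n * R)⌉₊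

/-- A synthesis code: a pair of conditional distributions from the message set to
`X^n` and `Y^n` respectively. -/
structure SynthCode (X Y : Type*) [Fintype X] [Fintype Y] (M n : ℕ) where
  PX : Fin M → (Fin n → X) → ℝ
  PY : Fin M → (Fin n → Y) → ℝ
  PX_pmf : ∀ m, IsPMF (PX m)
  PY_pmf : ∀ m, IsPMF (PY m)

/-- The distribution `P_{X^n Y^n}` induced by a synthesis code. -/
def SynthCode.induced {X Y : Type*} [Fintype X] [Fintype Y] {M n : ℕ}
    (c : SynthCode X Y M n) : (Fin n → X) × (Fin n → Y) → ℝ :=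
  fun z => (M : ℝ)⁻¹ * ∑ m, c.PX m z.1 * c.PY m z.2

/-- The `n`-fold product distribution `π^{⊗ n}` on `X^n × Y^n`. -/
def prodDist {X Y : Type*} [Fintype X] [Fintype Y] (π : X × Y → ℝ) (n : ℕ) :
    (Fin n → X) × (Fin n → Y) → ℝ :=
  fun z => ∏ i, π (z.1 i, z.2 i)

/-- Total variation distance between two distributions on a finite type. -/
def tvDist {α : Type*} [Fintype α] (P Q : α → ℝ) : ℝ :=
  (∑ a, |P a - Q a|) / 2

/-- Marginal `Q_U` of a distribution on `X × Y × U`. -/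
def margU {X Y U : Type*} [Fintype X] [Fintype Y] [Fintype U] (Q : X × Y × U → ℝ) (u : U) : ℝ :=
  ∑ p : X × Y, Q (p.1, p.2, u)

/-- Marginal `Q_{XU}` of a distribution on `X × Y × U`. -/
def margXU {X Y U : Type*} [Fintype X] [Fintype Y] [Fintype U] (Q : X × Y × U → ℝ)
    (x : X) (u : U) : ℝ := ∑ y, Q (x, y, u)

/-- Marginal `Q_{YU}` of a distribution on `X × Y × U`. -/
def margYU {X Y U : Type*} [Fintype X] [Fintype Y] [Fintype U] (Q : X × Y × U → ℝ)
    (y : Y) (u : U) : ℝ := ∑ x, Q (x, y, u)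

/-- Marginal `Q_{XY}` of a distribution on `X × Y × U`. -/
def margXY {X Y U : Type*} [Fintype X] [Fintype Y] [Fintype U] (Q : X × Y × U → ℝ)
    (x : X) (y : Y) : ℝ := ∑ u, Q (x, y, u)

/-- The set `𝒬` of distributions `Q_{XYU}` on `X × Y × U` (with `|U| = |X||Y|`)
whose `X × Y` marginal is supported inside `supp π`. -/
def QClass {X Y : Type*} [Fintype X] [Fintype Y] (π : X × Y → ℝ) :
    Set (X × Y × Fin (Fintype.card X * Fintype.card Y) → ℝ) :=
  { Q | IsPMF Q ∧ ∀ x y, 0 < margXY Q x y → 0 < π (x, y) }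

/-- The linear combination of likelihood ratios `ω^{(α)}_{Q_{XYU}}(x,y|u)`:
`ᾱ ( log (Q_{XY}/π) + log (Q_{XY|U}/(Q_{X|U}Q_{Y|U})) ) + α log (Q_{XY|U}/π)`. -/
def omegaFn {X Y U : Type*} [Fintype X] [Fintype Y] [Fintype U] (π : X × Y → ℝ) (α : ℝ)
    (Q : X × Y × U → ℝ) (z : X × Y × U) : ℝ :=
  (1 - α) * (Real.log (margXY Q z.1 z.2.1 / π (z.1, z.2.1)) +
      Real.log (Q z * margU Q z.2.2 / (margXU Q z.1 z.2.2 * margYU Q z.2.1 z.2.2))) +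
    α * Real.log (Q z / (margU Q z.2.2 * π (z.1, z.2.1)))

/-- The negative cumulant generating function `Ω^{(α,θ)}(Q_{XYU})`. -/
def OmegaQ {X Y U : Type*} [Fintype X] [Fintype Y] [Fintype U] (π : X × Y → ℝ) (α θ : ℝ)
    (Q : X × Y × U → ℝ) : ℝ :=
  -Real.log (∑ z ∈ Finset.univ.filter (fun z : X × Y × U => 0 < Q z),
    Q z * Real.exp (-(θ * omegaFn π α Q z)))

/-- The minimized negative cumulant generating function `Ω^{(α,θ)}`. -/
def OmegaMin {X Y : Type*} [Fintype X] [Fintype Y] (π : X × Y → ℝ) (α θ : ℝ) : ℝ :=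
  sInf { r | ∃ Q ∈ QClass π, r = OmegaQ π α θ Q }


/-- Relative entropy (KL divergence) between two distributions on a finite type. -/
def klDiv {α : Type*} [Fintype α] (P Q : α → ℝ) : ℝ :=
  ∑ a ∈ Finset.univ.filter (fun a => 0 < P a), P a * Real.log (P a / Q a)

/-- The conditional relative entropy `D(Q_{XY|U} ‖ Q_{X|U} Q_{Y|U} | Q_U)`. -/
def condKLind {X Y U : Type*} [Fintype X] [Fintype Y] [Fintype U] (Q : X × Y × U → ℝ) : ℝ :=
  ∑ z ∈ Finset.univ.filter (fun z : X × Y × U => 0 < Q z),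
    Q z * Real.log (Q z * margU Q z.2.2 / (margXU Q z.1 z.2.2 * margYU Q z.2.1 z.2.2))

/-- The conditional relative entropy `D(Q_{XY|U} ‖ π_{XY} | Q_U)`. -/
def condKLpi {X Y U : Type*} [Fintype X] [Fintype Y] [Fintype U] (π : X × Y → ℝ)
    (Q : X × Y × U → ℝ) : ℝ :=
  ∑ z ∈ Finset.univ.filter (fun z : X × Y × U => 0 < Q z),
    Q z * Real.log (Q z / (margU Q z.2.2 * π (z.1, z.2.1)))

/-- `R^{(α)}(Q_{XYU}) = ᾱ (D(Q_{XY}‖π) + D(Q_{XY|U}‖Q_{X|U}Q_{Y|U}|Q_U))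
       + α D(Q_{XY|U}‖π|Q_U)`. -/
def Ralpha {X Y U : Type*} [Fintype X] [Fintype Y] [Fintype U] (π : X × Y → ℝ) (α : ℝ)
    (Q : X × Y × U → ℝ) : ℝ :=
  (1 - α) * (klDiv (fun p : X × Y => margXY Q p.1 p.2) π + condKLind Q) + α * condKLpi π Q

/-- `R^{(α)} = min_{Q_{XYU} ∈ 𝒬} R^{(α)}(Q_{XYU})`. -/
def RalphaMin {X Y : Type*} [Fintype X] [Fintype Y] (π : X × Y → ℝ) (α : ℝ) : ℝ :=
  sInf { r | ∃ Q ∈ QClass π, r = Ralpha π α Q }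


/-! ### Auxiliary elementary lemmas -/

lemma exp_neg_le_quad (t : ℝ) : Real.exp (-t) ≤ 1 - t + t^2 * (1 + Real.exp (-t)) := by
  have key : ∀ s : ℝ, 0 < s → Real.exp s ≤ 1 + s + s^2 * (1 + Real.exp s) := by
    intro s hs0
    have h1 : 1 - s ≤ Real.exp (-s) := by have := Real.add_one_le_exp (-s); linarith
    have h4 : (0:ℝ) < Real.exp s := Real.exp_pos _
    have h2 : (1 - s) * Real.exp s ≤ 1 := by
      have := mul_le_mul_of_nonneg_right h1 h4.le
      rw [← Real.exp_add] at this; simpa using this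
    nlinarith [mul_le_mul_of_nonneg_right h2 (by linarith : (0:ℝ) ≤ 1 + s)]
  rcases le_or_gt 0 t with ht | ht
  · have h1 : t + 1 ≤ Real.exp t := Real.add_one_le_exp t
    have h3 : (0:ℝ) < Real.exp (-t) := Real.exp_pos _
    have h2 : Real.exp (-t) * Real.exp t = 1 := by rw [← Real.exp_add]; norm_num
    have h5 : Real.exp (-t) * (t+1) ≤ 1 := by nlinarith
    have h6 : Real.exp (-t) ≤ 1 - t + t^2 := by nlinarith [mul_nonneg (mul_nonneg ht ht) ht]
    nlinarith [mul_nonneg (sq_nonneg t) h3.le]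
  · have := key (-t) (by linarith)
    nlinarith [this]

lemma neg_log_one_sub_le {x : ℝ} (h : |x| ≤ 1/2) : -Real.log (1 - x) ≤ x + 2*x^2 := by
  have hx1 : -(1/2) ≤ x := neg_le_of_abs_le h
  have hx2 : x ≤ 1/2 := le_of_abs_le h
  have hpos : (0:ℝ) < 1 - x := by linarith
  have h1 : (x + 2*x^2) + 1 ≤ Real.exp (x + 2*x^2) := Real.add_one_le_exp _
  have h2 : Real.exp (-(x + 2*x^2)) * Real.exp (x + 2*x^2) = 1 := by
    rw [← Real.exp_add, show -(x+2*x^2) + (x+2*x^2) = 0 by ring, Real.exp_zero]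
  have h3 : (0:ℝ) < Real.exp (-(x + 2*x^2)) := Real.exp_pos _
  have key : Real.exp (-(x + 2*x^2)) ≤ 1 - x := by
    nlinarith [sq_nonneg x, sq_nonneg (x*x), mul_pos h3 (Real.exp_pos (x+2*x^2))]
  have := (Real.le_log_iff_exp_le hpos).mpr key
  linarith

lemma abs_log_le_of_le {c a : ℝ} (hc : 0 < c) (h1 : c ≤ a) (h2 : a ≤ 1) :
    |Real.log a| ≤ -Real.log c := by
  have ha : 0 < a := lt_of_lt_of_le hc h1
  have hla : Real.log a ≤ 0 := Real.log_nonpos ha.le h2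
  have : Real.log c ≤ Real.log a := Real.log_le_log hc h1
  rw [abs_of_nonpos hla]; linarith

lemma sum_comp_inj_le {β γ : Type*} [Fintype β] [Fintype γ] (f : β → ℝ)
    (hf : ∀ b, 0 ≤ f b) (h1 : ∑ b, f b = 1) (e : γ → β) (he : Function.Injective e) :
    ∑ c, f (e c) ≤ 1 := by
  classical
  rw [← Finset.sum_image (fun x _ y _ h => he h), ← h1]
  exact Finset.sum_le_sum_of_subset_of_nonneg (Finset.subset_univ _) (fun b _ _ => hf b)

lemma sq_mul_exp_neg_half_le {t : ℝ} (ht : 0 ≤ t) : Real.exp (-(t/2)) * t^2 ≤ 16 := by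
  have h1 : t/4 + 1 ≤ Real.exp (t/4) := Real.add_one_le_exp _
  have h2 : Real.exp (t/4) * Real.exp (t/4) = Real.exp (t/2) := by
    rw [← Real.exp_add]; ring_nf
  have h3 : t^2/16 ≤ Real.exp (t/2) := by nlinarith [Real.exp_pos (t/4)]
  have h4 : Real.exp (-(t/2)) * Real.exp (t/2) = 1 := by rw [← Real.exp_add]; norm_num
  nlinarith [Real.exp_pos (-(t/2)), Real.exp_pos (t/2)]

/-- Sum over the support equals the full sum. -/
lemma sum_filter_pos_eq {β : Type*} [Fintype β] (Q : β → ℝ) (h0 : ∀ a, 0 ≤ Q a)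
    (g : β → ℝ) :
    ∑ a ∈ Finset.univ.filter (fun a => 0 < Q a), Q a * g a = ∑ a, Q a * g a := by
  classical
  refine Finset.sum_filter_of_ne (fun a _ hne => ?_)
  rcases (h0 a).lt_or_eq with h | h
  · exact h
  · exact absurd (by rw [← h, zero_mul]) hne

lemma sum_filter_pos_self {β : Type*} [Fintype β] (Q : β → ℝ) (h0 : ∀ a, 0 ≤ Q a)
    (h1 : ∑ a, Q a = 1) :
    ∑ a ∈ Finset.univ.filter (fun a => 0 < Q a), Q a = 1 := by
  classical
  rw [Finset.sum_filter_of_ne (fun a _ hne => (h0 a).lt_of_ne (Ne.symm hne))]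
  exact h1

/-- Entropy bound: `∑ Q a (−log Q a) ≤ log |β|`. -/
lemma sum_neg_log_le {β : Type*} [Fintype β] (Q : β → ℝ) (h0 : ∀ a, 0 ≤ Q a)
    (h1 : ∑ a, Q a = 1) :
    ∑ a ∈ Finset.univ.filter (fun a => 0 < Q a), Q a * (-Real.log (Q a)) ≤
      Real.log (Fintype.card β) := by
  classical
  have hne : Nonempty β := by
    by_contra h
    rw [not_nonempty_iff] at h
    rw [Finset.univ_eq_empty, Finset.sum_empty] at h1
    norm_num at h1
  have hN : (0:ℝ) < (Fintype.card β : ℝ) := by exact_mod_cast Fintype.card_pos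
  set N : ℝ := (Fintype.card β : ℝ) with hNdef
  have hfil : ∑ a ∈ Finset.univ.filter (fun a => 0 < Q a), Q a = 1 :=
    sum_filter_pos_self Q h0 h1
  have hterm : ∀ a ∈ Finset.univ.filter (fun a => 0 < Q a),
      Q a * (-Real.log (Q a)) ≤ Q a * Real.log N + 1/N - Q a := by
    intro a ha
    have hQa : 0 < Q a := (Finset.mem_filter.mp ha).2
    have h2 : Real.log (1/(Q a * N)) ≤ 1/(Q a * N) - 1 :=
      Real.log_le_sub_one_of_pos (by positivity)
    have h3 : Real.log (1/(Q a * N)) = -Real.log (Q a) - Real.log N := by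
      rw [one_div, Real.log_inv, Real.log_mul hQa.ne' hN.ne']; ring
    have h4 : -Real.log (Q a) ≤ 1/(Q a * N) + Real.log N - 1 := by rw [h3] at h2; linarith
    have h6 := mul_le_mul_of_nonneg_left h4 hQa.le
    have h5 : Q a * (1/(Q a * N)) = 1/N := by field_simp
    nlinarith [h6, h5]
  calc ∑ a ∈ Finset.univ.filter (fun a => 0 < Q a), Q a * (-Real.log (Q a))
      ≤ ∑ a ∈ Finset.univ.filter (fun a => 0 < Q a), (Q a * Real.log N + 1/N - Q a) :=
        Finset.sum_le_sum hterm
    _ = Real.log N + ((Finset.univ.filter (fun a => 0 < Q a)).card : ℝ) * (1/N) - 1 := by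
        rw [Finset.sum_sub_distrib, Finset.sum_add_distrib, ← Finset.sum_mul, hfil,
          Finset.sum_const, nsmul_eq_mul]
        ring
    _ ≤ Real.log N := by
        have hcard : ((Finset.univ.filter (fun a => 0 < Q a)).card : ℝ) ≤ N := by
          rw [hNdef]
          exact_mod_cast Finset.card_filter_le _ _
        have : ((Finset.univ.filter (fun a => 0 < Q a)).card : ℝ) * (1/N) ≤ 1 := by
          rw [mul_one_div, div_le_one hN]; exact hcard
        linarith

/-! ### Marginal bounds -/

section Marg

variable {X Y U : Type*} [Fintype X] [Fintype Y] [Fintype U]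

lemma le_margXY (Q : X × Y × U → ℝ) (h0 : ∀ z, 0 ≤ Q z) (z : X × Y × U) :
    Q z ≤ margXY Q z.1 z.2.1 :=
  Finset.single_le_sum (f := fun u => Q (z.1, z.2.1, u)) (fun i _ => h0 _)
    (Finset.mem_univ z.2.2)

lemma le_margU (Q : X × Y × U → ℝ) (h0 : ∀ z, 0 ≤ Q z) (z : X × Y × U) :
    Q z ≤ margU Q z.2.2 :=
  Finset.single_le_sum (f := fun p : X × Y => Q (p.1, p.2, z.2.2)) (fun i _ => h0 _)
    (Finset.mem_univ (z.1, z.2.1))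

lemma le_margXU (Q : X × Y × U → ℝ) (h0 : ∀ z, 0 ≤ Q z) (z : X × Y × U) :
    Q z ≤ margXU Q z.1 z.2.2 :=
  Finset.single_le_sum (f := fun y => Q (z.1, y, z.2.2)) (fun i _ => h0 _)
    (Finset.mem_univ z.2.1)

lemma le_margYU (Q : X × Y × U → ℝ) (h0 : ∀ z, 0 ≤ Q z) (z : X × Y × U) :
    Q z ≤ margYU Q z.2.1 z.2.2 :=
  Finset.single_le_sum (f := fun x => Q (x, z.2.1, z.2.2)) (fun i _ => h0 _)
    (Finset.mem_univ z.1)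

lemma margXY_le_one (Q : X × Y × U → ℝ) (h0 : ∀ z, 0 ≤ Q z) (h1 : ∑ z, Q z = 1)
    (x : X) (y : Y) : margXY Q x y ≤ 1 :=
  sum_comp_inj_le Q h0 h1 (fun u => (x, y, u)) (fun a b h => by simpa using h)

lemma margU_le_one (Q : X × Y × U → ℝ) (h0 : ∀ z, 0 ≤ Q z) (h1 : ∑ z, Q z = 1)
    (u : U) : margU Q u ≤ 1 :=
  sum_comp_inj_le Q h0 h1 (fun p : X × Y => (p.1, p.2, u)) (fun a b h => by
    simp only [Prod.mk.injEq] at h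
    exact Prod.ext h.1 h.2.1)

lemma margXU_le_one (Q : X × Y × U → ℝ) (h0 : ∀ z, 0 ≤ Q z) (h1 : ∑ z, Q z = 1)
    (x : X) (u : U) : margXU Q x u ≤ 1 :=
  sum_comp_inj_le Q h0 h1 (fun y => (x, y, u)) (fun a b h => by simpa using h)

lemma margYU_le_one (Q : X × Y × U → ℝ) (h0 : ∀ z, 0 ≤ Q z) (h1 : ∑ z, Q z = 1)
    (y : Y) (u : U) : margYU Q y u ≤ 1 :=
  sum_comp_inj_le Q h0 h1 (fun x => (x, y, u)) (fun a b h => by simpa using h)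

/-- The key pointwise bound `|ω| ≤ −log c + 5(−log Q z)` on the support. -/
lemma omega_abs_le (π : X × Y → ℝ) (hπ : IsPMF π) {α : ℝ} (hα : α ∈ Set.Ioc (0:ℝ) 1)
    {Q : X × Y × U → ℝ} (hQ0 : ∀ z, 0 ≤ Q z) (hQ1 : ∑ z, Q z = 1)
    (hsupp : ∀ x y, 0 < margXY Q x y → 0 < π (x, y))
    {z : X × Y × U} (hz : 0 < Q z) {c : ℝ} (hc : 0 < c) (hcπ : c ≤ π (z.1, z.2.1)) :
    |omegaFn π α Q z| ≤ (-Real.log c) + 5 * (-Real.log (Q z)) := by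
  obtain ⟨hα0, hα1⟩ := hα
  have hm1 := le_margXY Q hQ0 z
  have hmU1 := le_margU Q hQ0 z
  have hmXU1 := le_margXU Q hQ0 z
  have hmYU1 := le_margYU Q hQ0 z
  have hm2 := margXY_le_one Q hQ0 hQ1 z.1 z.2.1
  have hmU2 := margU_le_one Q hQ0 hQ1 z.2.2
  have hmXU2 := margXU_le_one Q hQ0 hQ1 z.1 z.2.2
  have hmYU2 := margYU_le_one Q hQ0 hQ1 z.2.1 z.2.2
  have hmpos : 0 < margXY Q z.1 z.2.1 := lt_of_lt_of_le hz hm1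
  have hmUpos : 0 < margU Q z.2.2 := lt_of_lt_of_le hz hmU1
  have hmXUpos : 0 < margXU Q z.1 z.2.2 := lt_of_lt_of_le hz hmXU1
  have hmYUpos : 0 < margYU Q z.2.1 z.2.2 := lt_of_lt_of_le hz hmYU1
  have hπpos : 0 < π (z.1, z.2.1) := hsupp _ _ hmpos
  have hπ1 : π (z.1, z.2.1) ≤ 1 :=
    le_trans (Finset.single_le_sum (fun p _ => hπ.1 p) (Finset.mem_univ (z.1, z.2.1))) hπ.2.le
  have hQle1 : Q z ≤ 1 := hm1.trans hm2
  set ℓ := -Real.log (Q z) with hℓ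
  set L := -Real.log c with hL
  have hℓ0 : 0 ≤ ℓ := by
    rw [hℓ]
    simpa using Real.log_nonpos hz.le hQle1
  have hL0 : 0 ≤ L := by
    rw [hL]
    simpa using Real.log_nonpos hc.le (hcπ.trans hπ1)
  have lb : ∀ m : ℝ, Q z ≤ m → m ≤ 1 → -ℓ ≤ Real.log m ∧ Real.log m ≤ 0 := by
    intro m hm hm'
    refine ⟨?_, Real.log_nonpos (le_trans hz.le hm) hm'⟩
    rw [hℓ, neg_neg]
    exact Real.log_le_log hz hm
  obtain ⟨h1a, h1b⟩ := lb _ hm1 hm2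
  obtain ⟨h2a, h2b⟩ := lb _ hmU1 hmU2
  obtain ⟨h3a, h3b⟩ := lb _ hmXU1 hmXU2
  obtain ⟨h4a, h4b⟩ := lb _ hmYU1 hmYU2
  have hp1 : -L ≤ Real.log (π (z.1, z.2.1)) := by
    rw [hL, neg_neg]; exact Real.log_le_log hc hcπ
  have hp2 : Real.log (π (z.1, z.2.1)) ≤ 0 := Real.log_nonpos hπpos.le hπ1
  have hQlog : Real.log (Q z) = -ℓ := by rw [hℓ, neg_neg]
  unfold omegaFn
  rw [Real.log_div hmpos.ne' hπpos.ne',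
    Real.log_div (mul_pos hz hmUpos).ne' (mul_pos hmXUpos hmYUpos).ne',
    Real.log_mul hz.ne' hmUpos.ne', Real.log_mul hmXUpos.ne' hmYUpos.ne',
    Real.log_div hz.ne' (mul_pos hmUpos hπpos).ne',
    Real.log_mul hmUpos.ne' hπpos.ne', hQlog]
  have hA1 : (Real.log (margXY Q z.1 z.2.1) - Real.log (π (z.1, z.2.1))) +
      (-ℓ + Real.log (margU Q z.2.2) -
        (Real.log (margXU Q z.1 z.2.2) + Real.log (margYU Q z.2.1 z.2.2))) ≤ L + 2*ℓ := by
    linarith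
  have hA2 : -(3*ℓ) ≤ (Real.log (margXY Q z.1 z.2.1) - Real.log (π (z.1, z.2.1))) +
      (-ℓ + Real.log (margU Q z.2.2) -
        (Real.log (margXU Q z.1 z.2.2) + Real.log (margYU Q z.2.1 z.2.2))) := by
    linarith
  have hB1 : -ℓ - (Real.log (margU Q z.2.2) + Real.log (π (z.1, z.2.1))) ≤ L := by linarith
  have hB2 : -ℓ ≤ -ℓ - (Real.log (margU Q z.2.2) + Real.log (π (z.1, z.2.1))) := by linarith
  rw [abs_le]
  constructor
  · nlinarith [mul_le_mul_of_nonneg_left hA2 (by linarith : (0:ℝ) ≤ 1 - α),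
      mul_le_mul_of_nonneg_left hB2 hα0.le, mul_nonneg hα0.le hℓ0,
      mul_nonneg hα0.le hL0]
  · nlinarith [mul_le_mul_of_nonneg_left hA1 (by linarith : (0:ℝ) ≤ 1 - α),
      mul_le_mul_of_nonneg_left hB1 hα0.le, mul_nonneg hα0.le hℓ0,
      mul_nonneg hα0.le hL0]

end Marg

section Identity

variable {X Y U : Type*} [Fintype X] [Fintype Y] [Fintype U]

lemma sum_klDiv_eq (π : X × Y → ℝ) {Q : X × Y × U → ℝ} (hQ0 : ∀ z, 0 ≤ Q z) :
    ∑ z ∈ Finset.univ.filter (fun z : X × Y × U => 0 < Q z),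
      Q z * Real.log (margXY Q z.1 z.2.1 / π (z.1, z.2.1))
    = klDiv (fun p : X × Y => margXY Q p.1 p.2) π := by
  have hm : ∀ p : X × Y, 0 ≤ margXY Q p.1 p.2 :=
    fun p => Finset.sum_nonneg fun u _ => hQ0 _
  trans ∑ x, ∑ y, margXY Q x y * Real.log (margXY Q x y / π (x, y))
  · rw [sum_filter_pos_eq Q hQ0
      (fun z : X × Y × U => Real.log (margXY Q z.1 z.2.1 / π (z.1, z.2.1)))]
    simp only [Fintype.sum_prod_type]
    refine Finset.sum_congr rfl fun x _ => Finset.sum_congr rfl fun y _ => ?_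
    rw [← Finset.sum_mul]
    rfl
  · unfold klDiv
    rw [sum_filter_pos_eq (fun p : X × Y => margXY Q p.1 p.2) hm
      (fun p : X × Y => Real.log (margXY Q p.1 p.2 / π p))]
    simp only [Fintype.sum_prod_type]

lemma sum_omega_eq (π : X × Y → ℝ) (α : ℝ) {Q : X × Y × U → ℝ} (hQ0 : ∀ z, 0 ≤ Q z) :
    ∑ z ∈ Finset.univ.filter (fun z : X × Y × U => 0 < Q z), Q z * omegaFn π α Q z
    = Ralpha π α Q := by
  have expand : ∀ z : X × Y × U, Q z * omegaFn π α Q z =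
      (1-α) * (Q z * Real.log (margXY Q z.1 z.2.1 / π (z.1, z.2.1))) +
      ((1-α) * (Q z * Real.log (Q z * margU Q z.2.2 /
          (margXU Q z.1 z.2.2 * margYU Q z.2.1 z.2.2))) +
       α * (Q z * Real.log (Q z / (margU Q z.2.2 * π (z.1, z.2.1))))) := by
    intro z; unfold omegaFn; ring
  rw [Finset.sum_congr rfl (fun z _ => expand z), Finset.sum_add_distrib,
    Finset.sum_add_distrib, ← Finset.mul_sum, ← Finset.mul_sum, ← Finset.mul_sum,
    sum_klDiv_eq π hQ0]
  unfold Ralpha condKLind condKLpi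
  ring

end Identity

section Bounds

variable {X Y U : Type*} [Fintype X] [Fintype Y] [Fintype U]

lemma abs_Ralpha_le (π : X × Y → ℝ) (hπ : IsPMF π) {α : ℝ} (hα : α ∈ Set.Ioc (0:ℝ) 1)
    {Q : X × Y × U → ℝ} (hQ0 : ∀ z, 0 ≤ Q z) (hQ1 : ∑ z, Q z = 1)
    (hsupp : ∀ x y, 0 < margXY Q x y → 0 < π (x, y))
    {c : ℝ} (hc : 0 < c) (hcπ : ∀ x y, 0 < π (x, y) → c ≤ π (x, y)) :
    |Ralpha π α Q| ≤ -Real.log c + 5 * Real.log (Fintype.card (X × Y × U)) := by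
  rw [← sum_omega_eq π α hQ0]
  calc |∑ z ∈ Finset.univ.filter (fun z : X × Y × U => 0 < Q z), Q z * omegaFn π α Q z|
      ≤ ∑ z ∈ Finset.univ.filter (fun z : X × Y × U => 0 < Q z), |Q z * omegaFn π α Q z| :=
        Finset.abs_sum_le_sum_abs _ _
    _ ≤ ∑ z ∈ Finset.univ.filter (fun z : X × Y × U => 0 < Q z),
          (Q z * (-Real.log c) + 5 * (Q z * (-Real.log (Q z)))) := by
        refine Finset.sum_le_sum fun z hz => ?_
        have hzpos : 0 < Q z := (Finset.mem_filter.mp hz).2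
        have hπpos : 0 < π (z.1, z.2.1) := hsupp _ _ (lt_of_lt_of_le hzpos (le_margXY Q hQ0 z))
        have hω := omega_abs_le π hπ hα hQ0 hQ1 hsupp hzpos hc (hcπ _ _ hπpos)
        rw [abs_mul, abs_of_pos hzpos]
        nlinarith [mul_le_mul_of_nonneg_left hω hzpos.le]
    _ ≤ -Real.log c + 5 * Real.log (Fintype.card (X × Y × U)) := by
        rw [Finset.sum_add_distrib, ← Finset.sum_mul, sum_filter_pos_self Q hQ0 hQ1,
          ← Finset.mul_sum]
        have h2 := sum_neg_log_le Q hQ0 hQ1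
        nlinarith [h2]

/-- Pointwise bound for the second-order term. -/
lemma core_term_bound (π : X × Y → ℝ) (hπ : IsPMF π) {α : ℝ} (hα : α ∈ Set.Ioc (0:ℝ) 1)
    {Q : X × Y × U → ℝ} (hQ0 : ∀ z, 0 ≤ Q z) (hQ1 : ∑ z, Q z = 1)
    (hsupp : ∀ x y, 0 < margXY Q x y → 0 < π (x, y))
    {c : ℝ} (hc : 0 < c) (hcπ : ∀ x y, 0 < π (x, y) → c ≤ π (x, y))
    {θ : ℝ} (hθ : 0 < θ) (hθ1 : θ * (-Real.log c) ≤ 1) (hθ2 : θ ≤ 1/10)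
    {z : X × Y × U} (hz : 0 < Q z) :
    Q z * ((omegaFn π α Q z)^2 * (1 + Real.exp (-(θ * omegaFn π α Q z)))) ≤
      8 * (Real.log c)^2 + 3200 := by
  set w := omegaFn π α Q z with hwdef
  set ℓ := -Real.log (Q z) with hldef
  set L := -Real.log c with hLdef
  have hπpos : 0 < π (z.1, z.2.1) := hsupp _ _ (lt_of_lt_of_le hz (le_margXY Q hQ0 z))
  have hω : |w| ≤ L + 5 * ℓ := omega_abs_le π hπ hα hQ0 hQ1 hsupp hz hc (hcπ _ _ hπpos)
  have hQle1 : Q z ≤ 1 := (le_margXY Q hQ0 z).trans (margXY_le_one Q hQ0 hQ1 z.1 z.2.1)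
  have hℓ0 : 0 ≤ ℓ := by rw [hldef]; simpa using Real.log_nonpos hz.le hQle1
  have hQe : Q z = Real.exp (-ℓ) := by rw [hldef, neg_neg, Real.exp_log hz]
  -- bound on exp(-(θ w))
  have h1 : Real.exp (-(θ * w)) ≤ Real.exp (θ * (L + 5*ℓ)) := by
    apply Real.exp_le_exp.mpr
    nlinarith [mul_le_mul_of_nonneg_left hω hθ.le, neg_abs_le w]
  have h2 : Q z * Real.exp (θ * (L + 5*ℓ)) = Real.exp (θ*L) * Real.exp (-(ℓ/2)) *
      Real.exp (-(ℓ/2 - 5*θ*ℓ)) := by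
    rw [hQe, ← Real.exp_add, ← Real.exp_add, ← Real.exp_add]
    congr 1
    ring
  have h3 : Real.exp (-(ℓ/2 - 5*θ*ℓ)) ≤ 1 := by
    rw [Real.exp_le_one_iff]
    nlinarith
  have h4 : Real.exp (θ*L) ≤ 3 := by
    calc Real.exp (θ*L) ≤ Real.exp 1 := Real.exp_le_exp.mpr hθ1
      _ ≤ 3 := by linarith [Real.exp_one_lt_d9]
  have hF1 : Real.exp (-(ℓ/2)) ≤ 1 := by rw [Real.exp_le_one_iff]; linarith
  have hFl : Real.exp (-(ℓ/2)) * ℓ^2 ≤ 16 := sq_mul_exp_neg_half_le hℓ0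
  have hFpos : (0:ℝ) < Real.exp (-(ℓ/2)) := Real.exp_pos _
  -- A := Q z * (1 + exp(-(θ w))) ≤ 4 * exp(-(ℓ/2))
  have hA : Q z * (1 + Real.exp (-(θ * w))) ≤ 4 * Real.exp (-(ℓ/2)) := by
    have hq2 : Q z ≤ Real.exp (-(ℓ/2)) := by
      rw [hQe]
      apply Real.exp_le_exp.mpr
      linarith
    have := mul_le_mul_of_nonneg_left h1 hz.le
    nlinarith [h2, h3, h4, hFpos, mul_le_mul_of_nonneg_left h3
      (mul_nonneg (Real.exp_pos (θ*L)).le hFpos.le)]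
  have hw2 : w^2 ≤ (L + 5*ℓ)^2 :=
    sq_le_sq' (by linarith [neg_abs_le w]) (le_of_abs_le hω)
  have hsq : (L + 5*ℓ)^2 ≤ 2*L^2 + 50*ℓ^2 := by nlinarith [sq_nonneg (L - 5*ℓ)]
  have hL2 : L^2 = (Real.log c)^2 := by rw [hLdef]; ring
  have hAnn : 0 ≤ Q z * (1 + Real.exp (-(θ * w))) := by positivity
  calc Q z * (w^2 * (1 + Real.exp (-(θ * w))))
      = w^2 * (Q z * (1 + Real.exp (-(θ * w)))) := by ring
    _ ≤ (L + 5*ℓ)^2 * (4 * Real.exp (-(ℓ/2))) := by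
        apply mul_le_mul hw2 hA hAnn (sq_nonneg _)
    _ ≤ (2*L^2 + 50*ℓ^2) * (4 * Real.exp (-(ℓ/2))) := by
        apply mul_le_mul_of_nonneg_right hsq (by positivity)
    _ ≤ 8 * (Real.log c)^2 + 3200 := by
        rw [← hL2]
        nlinarith [sq_nonneg L, hF1, hFl, hFpos]

end Bounds

section OmegaBounds

variable {X Y U : Type*} [Fintype X] [Fintype Y] [Fintype U]

lemma OmegaQ_ge (π : X × Y → ℝ) (hπ : IsPMF π) {α : ℝ} (hα : α ∈ Set.Ioc (0:ℝ) 1)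
    {Q : X × Y × U → ℝ} (hQ0 : ∀ z, 0 ≤ Q z) (hQ1 : ∑ z, Q z = 1)
    (hsupp : ∀ x y, 0 < margXY Q x y → 0 < π (x, y))
    {c : ℝ} (hc : 0 < c) (hcπ : ∀ x y, 0 < π (x, y) → c ≤ π (x, y))
    {θ : ℝ} (hθ : 0 < θ) (hθ1 : θ * (-Real.log c) ≤ 1) (hθ2 : θ ≤ 1/10) :
    θ * Ralpha π α Q -
      θ^2 * ((Fintype.card (X × Y × U) : ℝ) * (8 * (Real.log c)^2 + 3200)) ≤
      OmegaQ π α θ Q := by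
  classical
  set F := Finset.univ.filter (fun z : X × Y × U => 0 < Q z) with hF
  set S := ∑ z ∈ F, Q z * Real.exp (-(θ * omegaFn π α Q z)) with hS
  have hfil : ∑ z ∈ F, Q z = 1 := sum_filter_pos_self Q hQ0 hQ1
  have hfne : F.Nonempty := by
    rcases F.eq_empty_or_nonempty with h | h
    · rw [h, Finset.sum_empty] at hfil; norm_num at hfil
    · exact h
  have hSpos : 0 < S := Finset.sum_pos
    (fun z hz => mul_pos (Finset.mem_filter.mp hz).2 (Real.exp_pos _)) hfne
  set C : ℝ := 8 * (Real.log c)^2 + 3200 with hC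
  have hC0 : 0 ≤ C := by rw [hC]; positivity
  have hterm : ∀ z ∈ F, Q z * Real.exp (-(θ * omegaFn π α Q z)) ≤
      Q z - θ * (Q z * omegaFn π α Q z) + θ^2 * C := by
    intro z hz
    have hzpos : 0 < Q z := (Finset.mem_filter.mp hz).2
    have p1 := mul_le_mul_of_nonneg_left (exp_neg_le_quad (θ * omegaFn π α Q z)) hzpos.le
    have p2 := core_term_bound π hπ hα hQ0 hQ1 hsupp hc hcπ hθ hθ1 hθ2 hzpos
    rw [hC]
    nlinarith [mul_le_mul_of_nonneg_left p2 (sq_nonneg θ)]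
  have hSle : S ≤ 1 - θ * Ralpha π α Q + θ^2 * (F.card : ℝ) * C := by
    calc S ≤ ∑ z ∈ F, (Q z - θ * (Q z * omegaFn π α Q z) + θ^2 * C) :=
          Finset.sum_le_sum hterm
      _ = 1 - θ * Ralpha π α Q + θ^2 * (F.card : ℝ) * C := by
          rw [Finset.sum_add_distrib, Finset.sum_sub_distrib, hfil, ← Finset.mul_sum,
            sum_omega_eq π α hQ0, Finset.sum_const, nsmul_eq_mul]
          ring
  have hlog : Real.log S ≤ S - 1 := Real.log_le_sub_one_of_pos hSpos
  have hcard : (F.card : ℝ) ≤ (Fintype.card (X × Y × U) : ℝ) := by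
    exact_mod_cast Finset.card_filter_le _ _
  have : OmegaQ π α θ Q = -Real.log S := rfl
  rw [this]
  nlinarith [mul_le_mul_of_nonneg_left hcard (mul_nonneg (sq_nonneg θ) hC0)]

lemma OmegaQ_le (π : X × Y → ℝ) (hπ : IsPMF π) {α : ℝ} (hα : α ∈ Set.Ioc (0:ℝ) 1)
    {Q : X × Y × U → ℝ} (hQ0 : ∀ z, 0 ≤ Q z) (hQ1 : ∑ z, Q z = 1)
    {θ : ℝ} (hθ : 0 < θ) (hK : θ * |Ralpha π α Q| ≤ 1/2) :
    OmegaQ π α θ Q ≤ θ * Ralpha π α Q + 2 * θ^2 * (Ralpha π α Q)^2 := by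
  classical
  set F := Finset.univ.filter (fun z : X × Y × U => 0 < Q z) with hF
  set S := ∑ z ∈ F, Q z * Real.exp (-(θ * omegaFn π α Q z)) with hS
  have hfil : ∑ z ∈ F, Q z = 1 := sum_filter_pos_self Q hQ0 hQ1
  set R := Ralpha π α Q with hR
  have hxabs : |θ * R| ≤ 1/2 := by rw [abs_mul, abs_of_pos hθ]; exact hK
  have hx1 : -(1/2) ≤ θ*R := neg_le_of_abs_le hxabs
  have hx2 : θ*R ≤ 1/2 := le_of_abs_le hxabs
  have hSge : 1 - θ * R ≤ S := by
    have : ∀ z ∈ F, Q z - θ * (Q z * omegaFn π α Q z) ≤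
        Q z * Real.exp (-(θ * omegaFn π α Q z)) := by
      intro z hz
      have hzpos : 0 < Q z := (Finset.mem_filter.mp hz).2
      have := Real.add_one_le_exp (-(θ * omegaFn π α Q z))
      nlinarith [mul_le_mul_of_nonneg_left this hzpos.le]
    have h2 := Finset.sum_le_sum this
    rw [Finset.sum_sub_distrib, hfil, ← Finset.mul_sum, sum_omega_eq π α hQ0, ← hR] at h2
    exact h2
  have hpos : (0:ℝ) < 1 - θ*R := by linarith
  have hlog : Real.log (1 - θ*R) ≤ Real.log S := Real.log_le_log hpos hSge
  have hneg := neg_log_one_sub_le hxabs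
  have : OmegaQ π α θ Q = -Real.log S := rfl
  rw [this]
  nlinarith [hneg, hlog]

end OmegaBounds

set_option maxHeartbeats 1000000 in
/-- Small-`θ` limit of the minimized negative cumulant generating function: for every
`α ∈ (0,1]`, `(1/θ) Ω^{(α,θ)} → R^{(α)}` as `θ ↓ 0`. -/
theorem Omega_small_theta_limit
    {X Y : Type*} [Fintype X] [Fintype Y] (π : X × Y → ℝ) (hπ : IsPMF π)
    (α : ℝ) (hα : α ∈ Set.Ioc (0 : ℝ) 1) :
    Filter.Tendsto (fun θ : ℝ => (1 / θ) * OmegaMin π α θ)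
      (nhdsWithin 0 (Set.Ioi 0)) (nhds (RalphaMin π α)) := by
  classical
  obtain ⟨hπ0, hπ1⟩ := hπ
  have hπ' : IsPMF π := ⟨hπ0, hπ1⟩
  have hne : Nonempty (X × Y) := by
    by_contra h
    rw [not_nonempty_iff] at h
    rw [Finset.univ_eq_empty, Finset.sum_empty] at hπ1
    norm_num at hπ1
  have hX : Nonempty X := (nonempty_prod.mp hne).1
  have hY : Nonempty Y := (nonempty_prod.mp hne).2
  have hXY : 0 < Fintype.card X * Fintype.card Y :=
    Nat.mul_pos Fintype.card_pos Fintype.card_pos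
  have hπle1 : ∀ p : X × Y, π p ≤ 1 := fun p =>
    (Finset.single_le_sum (fun q _ => hπ0 q) (Finset.mem_univ p)).trans hπ1.le
  obtain ⟨T, hT⟩ : ∃ x, x = Finset.univ.filter (fun p : X × Y => 0 < π p) := ⟨_, rfl⟩
  have hTsum : ∑ p ∈ T, π p = 1 := by rw [hT]; exact sum_filter_pos_self π hπ0 hπ1
  have hTne : T.Nonempty := by
    rcases T.eq_empty_or_nonempty with h | h
    · rw [h, Finset.sum_empty] at hTsum; norm_num at hTsum
    · exact h
  obtain ⟨c, hcdef⟩ : ∃ x, x = T.inf' hTne π := ⟨_, rfl⟩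
  have hcpos : 0 < c := by
    rw [hcdef, Finset.lt_inf'_iff]
    intro p hp
    rw [hT] at hp
    exact (Finset.mem_filter.mp hp).2
  have hcπ : ∀ x y, 0 < π (x, y) → c ≤ π (x, y) := by
    intro x y h
    rw [hcdef]
    exact Finset.inf'_le π (by rw [hT]; simp [h])
  have hc1 : c ≤ 1 := by
    obtain ⟨p0, hp0⟩ := hTne
    rw [hcdef]
    exact (Finset.inf'_le π hp0).trans (hπle1 p0)
  obtain ⟨N, hNdef⟩ : ∃ x : ℝ, x = (Fintype.card (X × Y × Fin (Fintype.card X * Fintype.card Y)) : ℝ) := ⟨_, rfl⟩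
  have hUne : Nonempty (Fin (Fintype.card X * Fintype.card Y)) := ⟨⟨0, hXY⟩⟩
  have hN1 : 1 ≤ N := by
    rw [hNdef]
    exact_mod_cast Fintype.card_pos
  obtain ⟨L, hLdef⟩ : ∃ x, x = -Real.log c := ⟨_, rfl⟩
  have hL0 : 0 ≤ L := by
    rw [hLdef]
    simpa using Real.log_nonpos hcpos.le hc1
  have hlogN0 : 0 ≤ Real.log N := Real.log_nonneg hN1
  obtain ⟨K, hKdef⟩ : ∃ x, x = L + 5 * Real.log N := ⟨_, rfl⟩
  have hK0 : 0 ≤ K := by rw [hKdef]; linarith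
  obtain ⟨CT, hCTdef⟩ : ∃ x, x = N * (8 * (Real.log c)^2 + 3200) := ⟨_, rfl⟩
  have hCT0 : 0 ≤ CT := by rw [hCTdef]; nlinarith [sq_nonneg (Real.log c)]
  obtain ⟨Cf, hCfdef⟩ : ∃ x, x = CT + 2 * K^2 := ⟨_, rfl⟩
  have hCf0 : 0 ≤ Cf := by rw [hCfdef]; nlinarith [sq_nonneg K]
  obtain ⟨D, hDdef⟩ : ∃ x, x = 10 + L + 2 * K := ⟨_, rfl⟩
  have hD10 : 10 ≤ D := by rw [hDdef]; linarith
  have hDpos : 0 < D := by linarith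
  -- witness distribution
  obtain ⟨u0, hu0⟩ : ∃ x : Fin (Fintype.card X * Fintype.card Y), x = ⟨0, hXY⟩ := ⟨_, rfl⟩
  obtain ⟨Q0, hQ0def⟩ : ∃ x : X × Y × Fin (Fintype.card X * Fintype.card Y) → ℝ,
      x = fun z => if z.2.2 = u0 then π (z.1, z.2.1) else 0 := ⟨_, rfl⟩
  have hQ0marg : ∀ x y, margXY Q0 x y = π (x, y) := by
    intro x y
    simp [margXY, hQ0def, Finset.sum_ite_eq']
  have hQ0mem : Q0 ∈ QClass π := by
    refine ⟨⟨fun z => ?_, ?_⟩, fun x y h => ?_⟩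
    · rw [hQ0def]
      dsimp only
      split
      · exact hπ0 _
      · exact le_refl 0
    · have heq : ∑ z : X × Y × Fin (Fintype.card X * Fintype.card Y), Q0 z
          = ∑ p : X × Y, π p := by
        simp [hQ0def, Fintype.sum_prod_type, Finset.sum_ite_eq']
      rw [heq]; exact hπ1
    · rw [hQ0marg x y] at h
      exact h
  have hSRne : { r | ∃ Q ∈ QClass π, r = Ralpha π α Q }.Nonempty :=
    ⟨Ralpha π α Q0, Q0, hQ0mem, rfl⟩
  have habsR : ∀ Q ∈ QClass π, |Ralpha π α Q| ≤ K := by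
    rintro Q ⟨⟨hq0, hq1⟩, hsuppQ⟩
    rw [hKdef, hLdef, hNdef]
    exact abs_Ralpha_le π hπ' hα hq0 hq1 hsuppQ hcpos hcπ
  have hSRbdd : BddBelow { r | ∃ Q ∈ QClass π, r = Ralpha π α Q } := by
    refine ⟨-K, ?_⟩
    rintro r ⟨Q, hQ, rfl⟩
    linarith [neg_le_of_abs_le (habsR Q hQ)]
  have hRmin_le : ∀ Q ∈ QClass π, RalphaMin π α ≤ Ralpha π α Q := by
    intro Q hQ
    exact csInf_le hSRbdd ⟨Q, hQ, rfl⟩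
  have hOmBdd : ∀ θ : ℝ, 0 < θ → θ ≤ 1/D →
      (θ * RalphaMin π α - θ^2 * CT ≤ OmegaMin π α θ ∧
        OmegaMin π α θ ≤ θ * RalphaMin π α + 2 * θ^2 * K^2) := by
    intro θ hθpos hθle
    have hθ10 : θ ≤ 1/10 :=
      hθle.trans (one_div_le_one_div_of_le (by norm_num) hD10)
    have hθL : θ * (-Real.log c) ≤ 1 := by
      rw [← hLdef]
      calc θ * L ≤ (1/D) * L := mul_le_mul_of_nonneg_right hθle hL0
        _ = L / D := one_div_mul_eq_div _ _
        _ ≤ 1 := by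
            rw [div_le_one hDpos, hDdef]
            linarith
    have hθK2 : θ * K ≤ 1/2 := by
      calc θ * K ≤ (1/D) * K := mul_le_mul_of_nonneg_right hθle hK0
        _ = K / D := one_div_mul_eq_div _ _
        _ ≤ 1/2 := by
            rw [div_le_iff₀ hDpos, hDdef]
            linarith
    have hlowall : ∀ Q ∈ QClass π, θ * RalphaMin π α - θ^2 * CT ≤ OmegaQ π α θ Q := by
      rintro Q hQmem
      obtain ⟨⟨hq0, hq1⟩, hsuppQ⟩ := hQmem
      have h1 := OmegaQ_ge π hπ' hα hq0 hq1 hsuppQ hcpos hcπ hθpos hθL hθ10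
      rw [← hNdef, ← hCTdef] at h1
      have h2 := mul_le_mul_of_nonneg_left (hRmin_le Q ⟨⟨hq0, hq1⟩, hsuppQ⟩) hθpos.le
      linarith
    have hOmSetne : { r | ∃ Q ∈ QClass π, r = OmegaQ π α θ Q }.Nonempty :=
      ⟨OmegaQ π α θ Q0, Q0, hQ0mem, rfl⟩
    have hOmSetBdd : BddBelow { r | ∃ Q ∈ QClass π, r = OmegaQ π α θ Q } := by
      refine ⟨θ * RalphaMin π α - θ^2 * CT, ?_⟩
      rintro r ⟨Q, hQ, rfl⟩
      exact hlowall Q hQ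
    constructor
    · refine le_csInf hOmSetne ?_
      rintro r ⟨Q, hQ, rfl⟩
      exact hlowall Q hQ
    · apply le_of_forall_pos_le_add
      intro ε hε
      have hlt : sInf { r | ∃ Q ∈ QClass π, r = Ralpha π α Q } < RalphaMin π α + ε/θ := by
        have : 0 < ε/θ := div_pos hε hθpos
        have h0 : sInf { r | ∃ Q ∈ QClass π, r = Ralpha π α Q } = RalphaMin π α := rfl
        linarith [h0.le]
      obtain ⟨r, hrmem, hrlt⟩ := exists_lt_of_csInf_lt hSRne hlt
      obtain ⟨Q, hQmem, rfl⟩ := hrmem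
      have habs := habsR Q hQmem
      obtain ⟨⟨hq0, hq1⟩, hsuppQ⟩ := hQmem
      have hθK : θ * |Ralpha π α Q| ≤ 1/2 :=
        le_trans (mul_le_mul_of_nonneg_left habs hθpos.le) hθK2
      have h1 := OmegaQ_le π hπ' hα hq0 hq1 hθpos hθK
      have h2 : OmegaMin π α θ ≤ OmegaQ π α θ Q :=
        csInf_le hOmSetBdd ⟨Q, ⟨⟨hq0, hq1⟩, hsuppQ⟩, rfl⟩
      have hsq : (Ralpha π α Q)^2 ≤ K^2 :=
        sq_le_sq' (by linarith [neg_le_of_abs_le habs]) (le_of_abs_le habs)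
      have hεeq : θ * (ε/θ) = ε := by field_simp
      have h3 : θ * Ralpha π α Q ≤ θ * (RalphaMin π α + ε/θ) :=
        mul_le_mul_of_nonneg_left hrlt.le hθpos.le
      nlinarith [mul_le_mul_of_nonneg_left hsq (by positivity : (0:ℝ) ≤ 2*θ^2)]
  rw [Metric.tendsto_nhdsWithin_nhds]
  intro ε hε
  refine ⟨min (1/D) (ε/(Cf+1)), lt_min (one_div_pos.mpr hDpos) (div_pos hε (by linarith)), ?_⟩
  intro θ hθmem hdist
  have hθpos : 0 < θ := hθmem
  have hθne : θ ≠ 0 := hθpos.ne'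
  rw [Real.dist_eq, sub_zero, abs_of_pos hθpos] at hdist
  have hθD : θ ≤ 1/D := le_of_lt (lt_of_lt_of_le hdist (min_le_left _ _))
  have hθε : θ < ε/(Cf+1) := lt_of_lt_of_le hdist (min_le_right _ _)
  obtain ⟨hlow, hupp⟩ := hOmBdd θ hθpos hθD
  rw [Real.dist_eq]
  have k1 : (1/θ) * OmegaMin π α θ - RalphaMin π α ≤ θ * Cf := by
    have hm := mul_le_mul_of_nonneg_left hupp (le_of_lt (one_div_pos.mpr hθpos))
    have hsimp : (1/θ) * (θ * RalphaMin π α + 2*θ^2*K^2) = RalphaMin π α + 2*θ*K^2 := by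
      field_simp
    rw [hsimp] at hm
    rw [hCfdef]
    nlinarith [mul_nonneg hθpos.le hCT0]
  have k2 : -(θ * Cf) ≤ (1/θ) * OmegaMin π α θ - RalphaMin π α := by
    have hm := mul_le_mul_of_nonneg_left hlow (le_of_lt (one_div_pos.mpr hθpos))
    have hsimp : (1/θ) * (θ * RalphaMin π α - θ^2*CT) = RalphaMin π α - θ*CT := by
      field_simp
    rw [hsimp] at hm
    rw [hCfdef]
    nlinarith [mul_nonneg hθpos.le (by nlinarith [sq_nonneg K] : (0:ℝ) ≤ 2*K^2)]
  have habs2 : |(1/θ) * OmegaMin π α θ - RalphaMin π α| ≤ θ * Cf := abs_le.mpr ⟨k2, k1⟩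
  have hfin : θ * Cf < ε := by
    have := (lt_div_iff₀ (by linarith : (0:ℝ) < Cf+1)).mp hθε
    nlinarith
  linarith [habs2, hfin]
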